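/- Let (Ω, ℱ, ℙ) be a probability space carrying two sequences (A_N)_N, (B_N)_N of random real symmetric N×N matrices such that rank(A_N(ω) − B_N(ω)) ≤ 1 for all ω ∈ Ω and all N. Let σ_N and μ_N denote the eigenvalue distribution measures of A_N and B_N respectively. If (μ_N)_N converges weakly in probability to the semicircle law σ_sc, then (σ_N)_N also converges weakly in probability to σ_sc. -/

import Mathlib

open MeasureTheory Filter
open scoped ENNReal Topology

open scoped Classical in
/-- The eigenvalue distribution measure `(1/N) ∑ δ_{λ_i}` of a real symmetric matrix. -/
noncomputable def evMeasure {N : ℕ} (A : Matrix (Fin N) (Fin N) ℝ) : Measure ℝ :=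
  if h : A.IsHermitian then ((N : ℝ≥0∞))⁻¹ • ∑ i, Measure.dirac (h.eigenvalues i) else 0

/-- The semicircle distribution. -/
noncomputable def semicircle : Measure ℝ :=
  volume.withDensity fun x => ENNReal.ofReal (Real.sqrt (4 - x ^ 2) / (2 * Real.pi))

section Aux
open Finset Module
open scoped RealInnerProductSpace
namespace ROP
variable {N : ℕ}

lemma toEuclideanLin_eigenvectorBasis {A : Matrix (Fin N) (Fin N) ℝ} (hA : A.IsHermitian)
    (i : Fin N) :
    Matrix.toEuclideanLin A (hA.eigenvectorBasis i) =
      hA.eigenvalues i • hA.eigenvectorBasis i := by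
  have h := hA.mulVec_eigenvectorBasis i
  rw [Matrix.toEuclideanLin_apply]
  exact congrArg (WithLp.equiv 2 (Fin N → ℝ)).symm h

lemma inner_quad {A : Matrix (Fin N) (Fin N) ℝ} (hA : A.IsHermitian)
    (x : EuclideanSpace ℝ (Fin N)) :
    ⟪x, Matrix.toEuclideanLin A x⟫ =
      ∑ i, hA.eigenvalues i * ⟪hA.eigenvectorBasis i, x⟫ ^ 2 := by
  set b := hA.eigenvectorBasis with hb
  have hx : Matrix.toEuclideanLin A x
      = ∑ i, (hA.eigenvalues i * ⟪b i, x⟫) • b i := by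
    conv_lhs => rw [← b.sum_repr' x, map_sum]
    refine Finset.sum_congr rfl fun i _ => ?_
    rw [_root_.map_smul, toEuclideanLin_eigenvectorBasis hA i, smul_smul, mul_comm]
  rw [hx, inner_sum]
  refine Finset.sum_congr rfl fun i _ => ?_
  rw [real_inner_smul_right, real_inner_comm]
  ring

lemma inner_self_sum (b : OrthonormalBasis (Fin N) ℝ (EuclideanSpace ℝ (Fin N)))
    (x : EuclideanSpace ℝ (Fin N)) :
    ⟪x, x⟫ = ∑ i, ⟪b i, x⟫ ^ 2 := by
  rw [← b.sum_inner_mul_inner x x]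
  refine Finset.sum_congr rfl fun i _ => ?_
  rw [real_inner_comm x (b i)]; ring

lemma repr_zero_of_mem_span (b : OrthonormalBasis (Fin N) ℝ (EuclideanSpace ℝ (Fin N)))
    (S : Set (Fin N)) {x : EuclideanSpace ℝ (Fin N)}
    (hx : x ∈ Submodule.span ℝ (b '' S)) {j : Fin N} (hj : j ∉ S) : ⟪b j, x⟫ = 0 := by
  induction hx using Submodule.span_induction with
  | mem y hy =>
    obtain ⟨i, hi, rfl⟩ := hy
    have hij : j ≠ i := fun h => hj (h ▸ hi)
    simpa [hij] using (orthonormal_iff_ite.mp b.orthonormal) j i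
  | zero => simp
  | add y z _ _ hy hz => rw [inner_add_right, hy, hz, add_zero]
  | smul c y _ hy => rw [real_inner_smul_right, hy, mul_zero]

lemma finrank_span_img (b : OrthonormalBasis (Fin N) ℝ (EuclideanSpace ℝ (Fin N)))
    (S : Finset (Fin N)) :
    finrank ℝ (Submodule.span ℝ (b '' (S : Set (Fin N)))) = S.card := by
  have li : LinearIndependent ℝ (fun i : (S : Set (Fin N)) => b i) := by
    have := b.toBasis.linearIndependent
    rw [b.coe_toBasis] at this
    exact this.comp _ Subtype.val_injective
  rw [Set.image_eq_range]
  rw [finrank_span_eq_card li]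
  exact Fintype.card_coe S

lemma rank_eq_finrank_range (M : Matrix (Fin N) (Fin N) ℝ) :
    M.rank = finrank ℝ (LinearMap.range (Matrix.toEuclideanLin M)) := by
  rw [Matrix.rank_eq_finrank_range_toLin M (PiLp.basisFun 2 ℝ (Fin N)) (PiLp.basisFun 2 ℝ (Fin N))]
  congr 1

lemma count_le_count {A B : Matrix (Fin N) (Fin N) ℝ} (hA : A.IsHermitian) (hB : B.IsHermitian)
    (hr : (A - B).rank ≤ 1) (t : ℝ) :
    (univ.filter fun i => hA.eigenvalues i < t).card ≤
      (univ.filter fun i => hB.eigenvalues i < t).card + 1 := by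
  by_contra hcon
  push_neg at hcon
  classical
  set SA : Finset (Fin N) := univ.filter (fun i => hA.eigenvalues i < t) with hSA
  set SB : Finset (Fin N) := univ.filter (fun i => ¬ hB.eigenvalues i < t) with hSB
  set V := Submodule.span ℝ ((hA.eigenvectorBasis : Fin N → EuclideanSpace ℝ (Fin N)) ''
    (SA : Set (Fin N))) with hV
  set W := Submodule.span ℝ ((hB.eigenvectorBasis : Fin N → EuclideanSpace ℝ (Fin N)) ''
    (SB : Set (Fin N))) with hW
  set K := LinearMap.ker (Matrix.toEuclideanLin (A - B)) with hK
  have hVr : finrank ℝ V = SA.card := finrank_span_img _ _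
  have hWr : finrank ℝ W = SB.card := finrank_span_img _ _
  have hKr : N ≤ finrank ℝ K + 1 := by
    have h1 := LinearMap.finrank_range_add_finrank_ker (Matrix.toEuclideanLin (A - B))
    rw [← rank_eq_finrank_range, ← hK] at h1
    rw [finrank_euclideanSpace, Fintype.card_fin] at h1
    omega
  have hcard : (univ.filter fun i => hB.eigenvalues i < t).card + SB.card = N := by
    rw [hSB]
    simpa using Finset.card_filter_add_card_filter_not
      (s := (univ : Finset (Fin N))) (p := fun i => hB.eigenvalues i < t)
  have hdim1 : finrank ℝ V + finrank ℝ K ≤ finrank ℝ (V ⊓ K : Submodule ℝ _) + N := by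
    have h1 := Submodule.finrank_sup_add_finrank_inf_eq V K
    have h2 : finrank ℝ (V ⊔ K : Submodule ℝ _) ≤ N := by
      simpa [finrank_euclideanSpace] using (V ⊔ K).finrank_le
    omega
  have hdim2 : finrank ℝ (V ⊓ K : Submodule ℝ _) + finrank ℝ W ≤
      finrank ℝ (V ⊓ K ⊓ W : Submodule ℝ _) + N := by
    have h1 := Submodule.finrank_sup_add_finrank_inf_eq (V ⊓ K) W
    have h2 : finrank ℝ (V ⊓ K ⊔ W : Submodule ℝ _) ≤ N := by
      simpa [finrank_euclideanSpace] using (V ⊓ K ⊔ W).finrank_le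
    omega
  have hpos : 0 < finrank ℝ (V ⊓ K ⊓ W : Submodule ℝ _) := by omega
  have hne : (V ⊓ K ⊓ W : Submodule ℝ _) ≠ ⊥ := by
    intro h
    rw [h, finrank_bot] at hpos
    exact lt_irrefl 0 hpos
  obtain ⟨x, hx, hx0⟩ := Submodule.exists_mem_ne_zero_of_ne_bot hne
  have hxV : x ∈ V := hx.1.1
  have hxK : x ∈ K := hx.1.2
  have hxW : x ∈ W := hx.2
  have hAB : Matrix.toEuclideanLin A x = Matrix.toEuclideanLin B x := by
    have h0 : Matrix.toEuclideanLin (A - B) x = 0 := hxK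
    rw [map_sub, LinearMap.sub_apply, sub_eq_zero] at h0
    exact h0
  have hxx : (0:ℝ) < ⟪x, x⟫ := by
    rcases lt_or_eq_of_le (real_inner_self_nonneg (x := x)) with h | h
    · exact h
    · exact absurd (inner_self_eq_zero.mp h.symm) hx0
  have hAlt : ⟪x, Matrix.toEuclideanLin A x⟫ < t * ⟪x, x⟫ := by
    rw [inner_quad hA x, inner_self_sum hA.eigenvectorBasis x, Finset.mul_sum]
    have hmemA : ∀ j : Fin N, ¬ hA.eigenvalues j < t → ⟪hA.eigenvectorBasis j, x⟫ = 0 := by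
      intro j hj
      exact repr_zero_of_mem_span _ _ hxV (by simp [hSA, hj])
    apply Finset.sum_lt_sum
    · intro i _
      by_cases hi : hA.eigenvalues i < t
      · nlinarith [sq_nonneg (⟪hA.eigenvectorBasis i, x⟫)]
      · simp [hmemA i hi]
    · have hex : ∃ i, ⟪hA.eigenvectorBasis i, x⟫ ≠ 0 := by
        by_contra hall
        push_neg at hall
        have h0 : ⟪x, x⟫ = (0:ℝ) := by
          rw [inner_self_sum hA.eigenvectorBasis x]
          simp [hall]
        linarith
      obtain ⟨i, hi⟩ := hex
      have hiS : hA.eigenvalues i < t := by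
        by_contra h
        exact hi (hmemA i h)
      refine ⟨i, Finset.mem_univ i, ?_⟩
      have : (0:ℝ) < ⟪hA.eigenvectorBasis i, x⟫ ^ 2 := by positivity
      nlinarith
  have hBge : t * ⟪x, x⟫ ≤ ⟪x, Matrix.toEuclideanLin B x⟫ := by
    rw [inner_quad hB x, inner_self_sum hB.eigenvectorBasis x, Finset.mul_sum]
    apply Finset.sum_le_sum
    intro i _
    by_cases hi : hB.eigenvalues i < t
    · have h0 : ⟪hB.eigenvectorBasis i, x⟫ = 0 :=
        repr_zero_of_mem_span _ _ hxW (by simp [hSB, hi])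
      simp [h0]
    · nlinarith [sq_nonneg (⟪hB.eigenvectorBasis i, x⟫), not_lt.mp hi]
  rw [hAB] at hAlt
  linarith


/-- partition points of `[-4,4]` into `m` pieces -/
noncomputable def pt (m : ℕ) (j : ℕ) : ℝ := -4 + 8 * j / m

/-- step approximation of `f` -/
noncomputable def stepf (f : ℝ → ℝ) (m : ℕ) (x : ℝ) : ℝ :=
  ∑ j ∈ Finset.range m, if pt m j ≤ x ∧ x < pt m (j+1) then f (pt m j) else 0

noncomputable def cnt (lam : Fin N → ℝ) (t : ℝ) : ℕ :=
  #(univ.filter fun i => lam i < t)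

noncomputable def outc (lam : Fin N → ℝ) : ℕ :=
  #(univ.filter fun i => ¬(-4 ≤ lam i ∧ lam i < 4))

noncomputable def inc (lam : Fin N → ℝ) : ℕ :=
  #(univ.filter fun i => -4 ≤ lam i ∧ lam i < 4)

noncomputable def cellc (lam : Fin N → ℝ) (m j : ℕ) : ℕ :=
  #(univ.filter fun i => pt m j ≤ lam i ∧ lam i < pt m (j+1))

lemma pt_mono (m : ℕ) {j k : ℕ} (h : j ≤ k) : pt m j ≤ pt m k := by
  unfold pt
  have hj : (j:ℝ) ≤ k := by exact_mod_cast h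
  have hm : (0:ℝ) ≤ m := Nat.cast_nonneg m
  rcases eq_or_lt_of_le hm with h0 | h0
  · simp [← h0]
  · gcongr

lemma pt_zero (m : ℕ) : pt m 0 = -4 := by simp [pt]

lemma pt_last {m : ℕ} (hm : 0 < m) : pt m m = 4 := by
  have : (m:ℝ) ≠ 0 := by positivity
  unfold pt
  rw [mul_div_assoc, div_self this]
  ring

lemma pt_succ_sub (m : ℕ) (j : ℕ) : pt m (j+1) - pt m j = 8 / m := by
  unfold pt
  push_cast
  ring

lemma mem_cell {m : ℕ} (hm : 0 < m) {x : ℝ} (h1 : -4 ≤ x) (h2 : x < 4) :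
    ∃ j, j < m ∧ pt m j ≤ x ∧ x < pt m (j+1) := by
  have hmr : (0:ℝ) < m := by exact_mod_cast hm
  set r : ℝ := (x + 4) * m / 8 with hr
  have hr0 : 0 ≤ r := by
    apply div_nonneg (mul_nonneg (by linarith) hmr.le) (by norm_num)
  refine ⟨⌊r⌋₊, ?_, ?_, ?_⟩
  · rw [Nat.floor_lt hr0, hr, div_lt_iff₀ (by norm_num : (0:ℝ) < 8)]
    nlinarith
  · have h := Nat.floor_le hr0
    rw [hr, le_div_iff₀ (by norm_num : (0:ℝ) < 8)] at h
    unfold pt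
    rw [← sub_nonneg]
    have : 8 * (⌊r⌋₊:ℝ) / m ≤ x + 4 := by
      rw [div_le_iff₀ hmr]
      nlinarith
    linarith
  · have h := Nat.lt_floor_add_one r
    rw [hr, div_lt_iff₀ (by norm_num : (0:ℝ) < 8)] at h
    unfold pt
    have : x + 4 < 8 * ((⌊r⌋₊:ℝ) + 1) / m := by
      rw [lt_div_iff₀ hmr]
      nlinarith
    push_cast
    linarith

lemma stepf_eq {m : ℕ} (f : ℝ → ℝ) {j : ℕ} (hj : j < m) {x : ℝ}
    (h1 : pt m j ≤ x) (h2 : x < pt m (j+1)) : stepf f m x = f (pt m j) := by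
  unfold stepf
  rw [Finset.sum_eq_single_of_mem j (Finset.mem_range.mpr hj)]
  · rw [if_pos ⟨h1, h2⟩]
  · intro k hk hkj
    rw [if_neg]
    rintro ⟨hk1, hk2⟩
    rcases lt_or_gt_of_ne hkj with h | h
    · have : pt m (k+1) ≤ pt m j := pt_mono m h
      linarith
    · have : pt m (j+1) ≤ pt m k := pt_mono m h
      linarith

lemma stepf_zero {m : ℕ} (hm : 0 < m) (f : ℝ → ℝ) {x : ℝ}
    (hx : ¬(-4 ≤ x ∧ x < 4)) : stepf f m x = 0 := by
  unfold stepf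
  apply Finset.sum_eq_zero
  intro j hj
  rw [if_neg]
  rintro ⟨h1, h2⟩
  refine hx ⟨?_, ?_⟩
  · calc (-4:ℝ) = pt m 0 := (pt_zero m).symm
      _ ≤ pt m j := pt_mono m (Nat.zero_le j)
      _ ≤ x := h1
  · calc x < pt m (j+1) := h2
      _ ≤ pt m m := pt_mono m (Finset.mem_range.mp hj)
      _ = 4 := pt_last hm

lemma abs_f_sub_stepf {m : ℕ} (hm : 0 < m) {f : ℝ → ℝ} {δ : ℝ}
    (hfδ : ∀ x y : ℝ, x ∈ Set.Ico (-4:ℝ) 4 → y ∈ Set.Ico (-4:ℝ) 4 → |x - y| ≤ 8 / m →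
      |f x - f y| ≤ δ)
    {x : ℝ} (h1 : -4 ≤ x) (h2 : x < 4) : |f x - stepf f m x| ≤ δ := by
  obtain ⟨j, hj, hj1, hj2⟩ := mem_cell hm h1 h2
  rw [stepf_eq f hj hj1 hj2]
  have hsub := pt_succ_sub m j
  have hpt1 : -4 ≤ pt m j := by
    calc (-4:ℝ) = pt m 0 := (pt_zero m).symm
      _ ≤ pt m j := pt_mono m (Nat.zero_le j)
  apply hfδ x (pt m j) ⟨h1, h2⟩ ⟨hpt1, lt_of_le_of_lt hj1 h2⟩
  rw [abs_le]
  constructor <;> linarith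

lemma sum_abs_f_sub_stepf {m : ℕ} (hm : 0 < m) {f : ℝ → ℝ} {δ M : ℝ}
    (hδ : 0 ≤ δ) (hM : ∀ x, |f x| ≤ M)
    (hfδ : ∀ x y : ℝ, x ∈ Set.Ico (-4:ℝ) 4 → y ∈ Set.Ico (-4:ℝ) 4 → |x - y| ≤ 8 / m →
      |f x - f y| ≤ δ)
    (lam : Fin N → ℝ) :
    |∑ i, f (lam i) - ∑ i, stepf f m (lam i)| ≤ δ * N + M * outc lam := by
  rw [← Finset.sum_sub_distrib]
  calc |∑ i, (f (lam i) - stepf f m (lam i))|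
      ≤ ∑ i, |f (lam i) - stepf f m (lam i)| := Finset.abs_sum_le_sum_abs _ _
    _ ≤ ∑ i : Fin N, (if -4 ≤ lam i ∧ lam i < 4 then δ else M) := by
        apply Finset.sum_le_sum
        intro i _
        by_cases hi : -4 ≤ lam i ∧ lam i < 4
        · rw [if_pos hi]; exact abs_f_sub_stepf hm hfδ hi.1 hi.2
        · rw [if_neg hi, stepf_zero hm f hi, sub_zero]; exact hM _
    _ = δ * inc lam + M * outc lam := by
        rw [Finset.sum_ite, Finset.sum_const, Finset.sum_const]
        unfold inc outc
        push_cast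
        ring
    _ ≤ δ * N + M * outc lam := by
        have h2 : inc lam ≤ N := by
          unfold inc
          calc _ ≤ (univ : Finset (Fin N)).card := Finset.card_filter_le _ _
            _ = N := by simp
        have : (inc lam : ℝ) ≤ N := by exact_mod_cast h2
        nlinarith

lemma sum_stepf {m : ℕ} (f : ℝ → ℝ) (lam : Fin N → ℝ) :
    ∑ i, stepf f m (lam i) = ∑ j ∈ Finset.range m, f (pt m j) * cellc lam m j := by
  unfold stepf
  rw [Finset.sum_comm]
  refine Finset.sum_congr rfl fun j _ => ?_
  rw [Finset.sum_ite, Finset.sum_const, Finset.sum_const_zero, add_zero]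
  unfold cellc
  push_cast
  ring

lemma cnt_split (lam : Fin N → ℝ) {a b : ℝ} (hab : a ≤ b) :
    cnt lam a + #(univ.filter fun i => a ≤ lam i ∧ lam i < b) = cnt lam b := by
  classical
  unfold cnt
  rw [← Finset.card_union_of_disjoint]
  · congr 1
    ext i
    simp only [Finset.mem_union, Finset.mem_filter, Finset.mem_univ, true_and]
    constructor
    · rintro (h | ⟨h1, h2⟩)
      · exact lt_of_lt_of_le h hab
      · exact h2
    · intro h
      rcases lt_or_ge (lam i) a with h' | h'
      · exact Or.inl h'
      · exact Or.inr ⟨h', h⟩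
  · rw [Finset.disjoint_left]
    intro i hi hi'
    simp only [Finset.mem_filter] at hi hi'
    linarith [hi.2, hi'.2.1]

lemma cnt_add_cell (lam : Fin N → ℝ) (m j : ℕ) :
    cnt lam (pt m j) + cellc lam m j = cnt lam (pt m (j+1)) :=
  cnt_split lam (pt_mono m (Nat.le_succ j))

lemma inc_eq (lam : Fin N → ℝ) : cnt lam (-4) + inc lam = cnt lam 4 :=
  cnt_split lam (by norm_num)

lemma outc_add_inc (lam : Fin N → ℝ) : inc lam + outc lam = N := by
  classical
  unfold inc outc
  rw [Finset.card_filter_add_card_filter_not]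
  simp

/-- Master deterministic estimate. -/
lemma master {N : ℕ} (hN : 0 < N) (lamA lamB : Fin N → ℝ) {f h : ℝ → ℝ} {M δ : ℝ} {m : ℕ}
    (hm : 0 < m) (hδ : 0 ≤ δ) (hM : ∀ x, |f x| ≤ M)
    (hfδ : ∀ x y : ℝ, x ∈ Set.Ico (-4:ℝ) 4 → y ∈ Set.Ico (-4:ℝ) 4 → |x - y| ≤ 8 / m →
      |f x - f y| ≤ δ)
    (hcnt : ∀ t : ℝ, |(cnt lamA t : ℝ) - (cnt lamB t : ℝ)| ≤ 1)
    (hh0 : ∀ x, 0 ≤ h x) (hh1 : ∀ x, h x ≤ 1)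
    (hhout : ∀ x, ¬(-4 ≤ x ∧ x < 4) → h x = 0) :
    |(N:ℝ)⁻¹ * ∑ i, f (lamA i) - (N:ℝ)⁻¹ * ∑ i, f (lamB i)| ≤
      2*δ + 2*M*(1 - (N:ℝ)⁻¹ * ∑ i, h (lamB i)) + 2*M/N + 2*m*M/N := by
  have hn : (0:ℝ) < N := by exact_mod_cast hN
  have hM0 : 0 ≤ M := le_trans (abs_nonneg _) (hM 0)
  -- step function comparison
  have hstep : |∑ i, stepf f m (lamA i) - ∑ i, stepf f m (lamB i)| ≤ 2*m*M := by
    rw [sum_stepf f lamA, sum_stepf f lamB, ← Finset.sum_sub_distrib]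
    calc |∑ j ∈ Finset.range m, (f (pt m j) * cellc lamA m j - f (pt m j) * cellc lamB m j)|
        ≤ ∑ j ∈ Finset.range m, |f (pt m j) * cellc lamA m j - f (pt m j) * cellc lamB m j| :=
          Finset.abs_sum_le_sum_abs _ _
      _ ≤ ∑ _j ∈ Finset.range m, M * 2 := by
          apply Finset.sum_le_sum
          intro j _
          rw [← mul_sub, abs_mul]
          have hcell : |(cellc lamA m j : ℝ) - (cellc lamB m j : ℝ)| ≤ 2 := by
            have e1 : (cnt lamA (pt m j) : ℝ) + cellc lamA m j = cnt lamA (pt m (j+1)) := by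
              exact_mod_cast congrArg (Nat.cast (R := ℝ)) (cnt_add_cell lamA m j)
            have e2 : (cnt lamB (pt m j) : ℝ) + cellc lamB m j = cnt lamB (pt m (j+1)) := by
              exact_mod_cast congrArg (Nat.cast (R := ℝ)) (cnt_add_cell lamB m j)
            have i1 := abs_le.mp (hcnt (pt m j))
            have i2 := abs_le.mp (hcnt (pt m (j+1)))
            rw [abs_le]
            constructor <;> linarith
          have := hM (pt m j)
          nlinarith [abs_nonneg ((cellc lamA m j : ℝ) - (cellc lamB m j : ℝ)),
            abs_nonneg (f (pt m j))]
      _ = m * (M * 2) := by rw [Finset.sum_const, Finset.card_range]; push_cast; ring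
      _ = 2*m*M := by ring
  -- out comparison
  have houtA : (outc lamA : ℝ) ≤ (outc lamB : ℝ) + 2 := by
    have e1 : (cnt lamA (-4) : ℝ) + inc lamA = cnt lamA 4 := by
      exact_mod_cast congrArg (Nat.cast (R := ℝ)) (inc_eq lamA)
    have e2 : (cnt lamB (-4) : ℝ) + inc lamB = cnt lamB 4 := by
      exact_mod_cast congrArg (Nat.cast (R := ℝ)) (inc_eq lamB)
    have e3 : (inc lamA : ℝ) + outc lamA = N := by
      exact_mod_cast congrArg (Nat.cast (R := ℝ)) (outc_add_inc lamA)
    have e4 : (inc lamB : ℝ) + outc lamB = N := by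
      exact_mod_cast congrArg (Nat.cast (R := ℝ)) (outc_add_inc lamB)
    have i1 := abs_le.mp (hcnt (-4))
    have i2 := abs_le.mp (hcnt 4)
    linarith
  -- h bound on outB
  have houtB : (outc lamB : ℝ) ≤ N - ∑ i, h (lamB i) := by
    have e4 : (inc lamB : ℝ) + outc lamB = N := by
      exact_mod_cast congrArg (Nat.cast (R := ℝ)) (outc_add_inc lamB)
    have hsum : ∑ i, h (lamB i) ≤ (inc lamB : ℝ) := by
      calc ∑ i, h (lamB i)
          ≤ ∑ i : Fin N, (if -4 ≤ lamB i ∧ lamB i < 4 then (1:ℝ) else 0) := by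
            apply Finset.sum_le_sum
            intro i _
            by_cases hi : -4 ≤ lamB i ∧ lamB i < 4
            · rw [if_pos hi]; exact hh1 _
            · rw [if_neg hi, hhout _ hi]
        _ = inc lamB := by
            rw [Finset.sum_ite, Finset.sum_const, Finset.sum_const_zero, add_zero]
            unfold inc
            push_cast
            ring
    linarith
  have hA := sum_abs_f_sub_stepf hm hδ hM hfδ lamA
  have hB := sum_abs_f_sub_stepf hm hδ hM hfδ lamB
  have habs : |∑ i, f (lamA i) - ∑ i, f (lamB i)| ≤
      2*δ*N + 2*M*((N:ℝ) - ∑ i, h (lamB i)) + 2*M + 2*m*M := by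
    have t1 := abs_sub_abs_le_abs_sub (∑ i, f (lamA i)) (∑ i, stepf f m (lamA i))
    have := abs_sub (∑ i, f (lamA i)) (∑ i, f (lamB i))
    calc |∑ i, f (lamA i) - ∑ i, f (lamB i)|
        ≤ |∑ i, f (lamA i) - ∑ i, stepf f m (lamA i)|
          + |∑ i, stepf f m (lamA i) - ∑ i, stepf f m (lamB i)|
          + |∑ i, stepf f m (lamB i) - ∑ i, f (lamB i)| := by
            have := abs_sub_le (∑ i, f (lamA i)) (∑ i, stepf f m (lamA i)) (∑ i, f (lamB i))
            have h2 := abs_sub_le (∑ i, stepf f m (lamA i)) (∑ i, stepf f m (lamB i))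
              (∑ i, f (lamB i))
            linarith
      _ ≤ (δ * N + M * outc lamA) + 2*m*M + (δ * N + M * outc lamB) := by
            rw [abs_sub_comm (∑ i, stepf f m (lamB i))]
            linarith
      _ ≤ 2*δ*N + 2*M*((N:ℝ) - ∑ i, h (lamB i)) + 2*M + 2*m*M := by nlinarith
  rw [← mul_sub, abs_mul, abs_of_nonneg (by positivity : (0:ℝ) ≤ (N:ℝ)⁻¹)]
  calc (N:ℝ)⁻¹ * |∑ i, f (lamA i) - ∑ i, f (lamB i)|
      ≤ (N:ℝ)⁻¹ * (2*δ*N + 2*M*((N:ℝ) - ∑ i, h (lamB i)) + 2*M + 2*m*M) := by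
        apply mul_le_mul_of_nonneg_left habs (by positivity)
    _ = 2*δ + 2*M*(1 - (N:ℝ)⁻¹ * ∑ i, h (lamB i)) + 2*M/N + 2*m*M/N := by
        field_simp

lemma rank_neg' {N : ℕ} (M : Matrix (Fin N) (Fin N) ℝ) : (-M).rank = M.rank := by
  have h : (-M).mulVecLin = -(M.mulVecLin) := by
    apply LinearMap.ext
    intro v
    simp [Matrix.mulVecLin_apply, Matrix.neg_mulVec]
  rw [Matrix.rank, Matrix.rank, h, LinearMap.range_neg]

lemma integral_evMeasure {N : ℕ} {A : Matrix (Fin N) (Fin N) ℝ} (hA : A.IsHermitian)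
    (f : BoundedContinuousFunction ℝ ℝ) :
    ∫ x, f x ∂(evMeasure A) = (N:ℝ)⁻¹ * ∑ i, f (hA.eigenvalues i) := by
  rw [evMeasure, dif_pos hA, integral_smul_measure, integral_finset_sum_measure]
  · simp only [integral_dirac' _ _ f.continuous.stronglyMeasurable]
    rw [ENNReal.toReal_inv, ENNReal.toReal_natCast, smul_eq_mul]
  · intro i _
    exact f.integrable _

lemma semicircle_null : semicircle {x : ℝ | 2 < |x|} = 0 := by
  have hmeas : MeasurableSet {x : ℝ | 2 < |x|} :=
    (isOpen_lt continuous_const continuous_abs).measurableSet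
  rw [semicircle, withDensity_apply _ hmeas]
  have h0 : ∀ x ∈ {x : ℝ | 2 < |x|},
      ENNReal.ofReal (Real.sqrt (4 - x ^ 2) / (2 * Real.pi)) = (fun _ => (0:ℝ≥0∞)) x := by
    intro x hx
    have hx2 : (2:ℝ) < |x| := hx
    have hs : Real.sqrt (4 - x ^ 2) = 0 := by
      rw [Real.sqrt_eq_zero']
      nlinarith [sq_abs x]
    simp [hs]
  rw [setLIntegral_congr_fun hmeas h0, lintegral_zero]

/-- the bump function: 1 on `[-2,2]`, supported in `(-4,4)` -/
noncomputable def bump : BoundedContinuousFunction ℝ ℝ :=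
  BoundedContinuousFunction.mkOfBound
    ⟨fun x => max 0 (min 1 (4 - |x|)),
      continuous_const.max (continuous_const.min (continuous_const.sub continuous_abs))⟩ 1 (by
      intro x y
      rw [Real.dist_eq]
      have h1x : (0:ℝ) ≤ max 0 (min 1 (4 - |x|)) := le_max_left _ _
      have h1y : (0:ℝ) ≤ max 0 (min 1 (4 - |y|)) := le_max_left _ _
      have h2x : max 0 (min 1 (4 - |x|)) ≤ 1 := max_le (by norm_num) (min_le_left _ _)
      have h2y : max 0 (min 1 (4 - |y|)) ≤ 1 := max_le (by norm_num) (min_le_left _ _)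
      rw [abs_le]
      exact ⟨by simp only [ContinuousMap.coe_mk]; linarith,
        by simp only [ContinuousMap.coe_mk]; linarith⟩)

lemma bump_apply (x : ℝ) : bump x = max 0 (min 1 (4 - |x|)) := rfl

lemma bump_nonneg (x : ℝ) : 0 ≤ bump x := le_max_left _ _

lemma bump_le_one (x : ℝ) : bump x ≤ 1 := by
  rw [bump_apply]; exact max_le (by norm_num) (min_le_left _ _)

lemma bump_zero {x : ℝ} (hx : ¬(-4 ≤ x ∧ x < 4)) : bump x = 0 := by
  rw [bump_apply]
  have h4 : (4:ℝ) ≤ |x| := by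
    push_neg at hx
    rcases lt_or_ge x (-4) with h | h
    · rw [abs_of_neg (by linarith)]; linarith
    · rw [abs_of_nonneg (by linarith [hx h])]; exact hx h
  have : min 1 (4 - |x|) ≤ 0 := le_trans (min_le_right _ _) (by linarith)
  exact max_eq_left this

lemma bump_eq_one {x : ℝ} (hx : ¬ 2 < |x|) : bump x = 1 := by
  rw [bump_apply]
  push_neg at hx
  have : min 1 (4 - |x|) = 1 := min_eq_left (by linarith)
  rw [this]
  exact max_eq_right (by norm_num)

end ROP
end Aux

/-- Rank-one perturbations preserve weak convergence in probability to the semicircle law: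
if `rank (A_N(ω) - B_N(ω)) ≤ 1` for all `ω` and the eigenvalue distribution measures of
`B_N` converge weakly in probability to the semicircle law, then so do those of `A_N`. -/
theorem rank_one_perturbation_semicircle {Ω : Type*} [MeasurableSpace Ω]
    (ℙ : Measure Ω) [IsProbabilityMeasure ℙ]
    (A B : (N : ℕ) → Ω → Matrix (Fin N) (Fin N) ℝ)
    (hAH : ∀ N ω, (A N ω).IsHermitian) (hBH : ∀ N ω, (B N ω).IsHermitian)
    (hrank : ∀ N ω, (A N ω - B N ω).rank ≤ 1)
    (hB : ∀ (f : BoundedContinuousFunction ℝ ℝ) (ε : ℝ), 0 < ε →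
      Tendsto (fun N : ℕ =>
          ℙ {ω | ε < |(∫ x, f x ∂(evMeasure (B N ω))) - ∫ x, f x ∂semicircle|})
        atTop (nhds 0)) :
    ∀ (f : BoundedContinuousFunction ℝ ℝ) (ε : ℝ), 0 < ε →
      Tendsto (fun N : ℕ =>
          ℙ {ω | ε < |(∫ x, f x ∂(evMeasure (A N ω))) - ∫ x, f x ∂semicircle|})
        atTop (nhds 0) := by
  -- Step 0: `semicircle` integrates the constant `1` to `1` (extracted from `hB`).
  have hsc1 : ∫ x, (1:ℝ) ∂semicircle = 1 := by
    by_contra hc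
    have hne : (1:ℝ) ≠ ∫ x, (1:ℝ) ∂semicircle := fun h => hc h.symm
    have hpos : 0 < |1 - ∫ x, (1:ℝ) ∂semicircle| := abs_pos.mpr (sub_ne_zero.mpr hne)
    have htend := hB (BoundedContinuousFunction.const ℝ (1:ℝ))
      (|1 - ∫ x, (1:ℝ) ∂semicircle| / 2) (by positivity)
    have heq : ∀ᶠ n in atTop, (ℙ {ω | |1 - ∫ x, (1:ℝ) ∂semicircle| / 2 <
        |(∫ x, (BoundedContinuousFunction.const ℝ (1:ℝ)) x ∂(evMeasure (B n ω))) -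
          ∫ x, (BoundedContinuousFunction.const ℝ (1:ℝ)) x ∂semicircle|}) = 1 := by
      filter_upwards [eventually_ge_atTop 1] with n hn
      have hset : {ω | |1 - ∫ x, (1:ℝ) ∂semicircle| / 2 <
          |(∫ x, (BoundedContinuousFunction.const ℝ (1:ℝ)) x ∂(evMeasure (B n ω))) -
            ∫ x, (BoundedContinuousFunction.const ℝ (1:ℝ)) x ∂semicircle|} = Set.univ := by
        ext ω
        simp only [Set.mem_setOf_eq, Set.mem_univ, iff_true]
        have h1 : ∫ x, (BoundedContinuousFunction.const ℝ (1:ℝ)) x ∂(evMeasure (B n ω))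
            = 1 := by
          rw [ROP.integral_evMeasure (hBH n ω)]
          simp only [BoundedContinuousFunction.const_apply']
          rw [Finset.sum_const, Finset.card_univ, Fintype.card_fin, nsmul_eq_mul, mul_one]
          rw [inv_mul_cancel₀]
          have : (0:ℝ) < n := by exact_mod_cast hn
          exact ne_of_gt this
        have h2 : ∫ x, (BoundedContinuousFunction.const ℝ (1:ℝ)) x ∂semicircle
            = ∫ x, (1:ℝ) ∂semicircle := by
          simp
        rw [h1, h2]
        linarith
      rw [hset, measure_univ]
    have h01 : (0:ℝ≥0∞) = 1 :=
      tendsto_nhds_unique (Tendsto.congr' heq htend) tendsto_const_nhds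
    exact zero_ne_one h01
  have hscuniv : semicircle Set.univ = 1 := by
    have h := hsc1
    rw [integral_const, smul_eq_mul, mul_one] at h
    exact (ENNReal.toReal_eq_one_iff _).mp h
  have hprob : IsProbabilityMeasure semicircle := ⟨hscuniv⟩
  -- Step 1: the bump function integrates to `1` against `semicircle`.
  have hbump1 : ∫ x, ROP.bump x ∂semicircle = 1 := by
    have hae : (fun x => ROP.bump x) =ᵐ[semicircle] fun _ => (1:ℝ) := by
      have hsub : {x : ℝ | ¬ ROP.bump x = 1} ⊆ {x : ℝ | 2 < |x|} := by
        intro x hx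
        by_contra h2
        exact hx (ROP.bump_eq_one h2)
      have h0 : semicircle {x : ℝ | ¬ ROP.bump x = 1} = 0 :=
        measure_mono_null hsub ROP.semicircle_null
      rw [Filter.EventuallyEq, ae_iff]
      simpa using h0
    rw [integral_congr_ae hae, hsc1]
  intro f ε hε
  have hM : ∀ x : ℝ, |f x| ≤ ‖f‖ := fun x => by
    have := f.norm_coe_le_norm x
    rwa [Real.norm_eq_abs] at this
  have hM0 : (0:ℝ) ≤ ‖f‖ := le_trans (abs_nonneg _) (hM 0)
  have h32M : (0:ℝ) < 2 * (3 + 2*‖f‖) := by nlinarith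
  set δ : ℝ := ε / (2 * (3 + 2*‖f‖)) with hδdef
  have hδpos : 0 < δ := div_pos hε h32M
  have hδspec : δ * (3 + 2*‖f‖) = ε/2 := by
    rw [hδdef]
    field_simp
  -- uniform continuity on [-4,4]
  have huc := (isCompact_Icc : IsCompact (Set.Icc (-4:ℝ) 4)).uniformContinuousOn_of_continuous
    (f.continuous.continuousOn)
  rw [Metric.uniformContinuousOn_iff] at huc
  obtain ⟨η, hη, hηp⟩ := huc δ hδpos
  obtain ⟨m', hm'⟩ := exists_nat_gt (8 / η)
  set m : ℕ := m' + 1 with hmdef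
  have hm : 0 < m := Nat.succ_pos m'
  have hmR : 8 / η < m := by
    have : (m':ℝ) ≤ m := by exact_mod_cast Nat.le_succ m'
    linarith
  have hmη : 8 / (m:ℝ) < η := by
    have hm0 : (0:ℝ) < m := by exact_mod_cast hm
    rw [div_lt_iff₀ hm0]
    rw [div_lt_iff₀ hη] at hmR
    linarith
  have hfδ : ∀ x y : ℝ, x ∈ Set.Ico (-4:ℝ) 4 → y ∈ Set.Ico (-4:ℝ) 4 → |x - y| ≤ 8 / m →
      |f x - f y| ≤ δ := by
    intro x y hx hy hxy
    have hd : dist x y < η := lt_of_le_of_lt (by rwa [Real.dist_eq]) hmη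
    have := hηp x (Set.mem_Icc_of_Ico hx) y (Set.mem_Icc_of_Ico hy) hd
    rw [Real.dist_eq] at this
    exact this.le
  obtain ⟨N₁, hN₁⟩ := exists_nat_gt ((2*‖f‖ + 2*m*‖f‖) / (ε/2))
  have htendf := hB f δ hδpos
  have htendh := hB ROP.bump δ hδpos
  have hbound : ∀ᶠ n in atTop,
      ℙ {ω | ε < |(∫ x, f x ∂(evMeasure (A n ω))) - ∫ x, f x ∂semicircle|} ≤
      ℙ {ω | δ < |(∫ x, f x ∂(evMeasure (B n ω))) - ∫ x, f x ∂semicircle|}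
      + ℙ {ω | δ < |(∫ x, ROP.bump x ∂(evMeasure (B n ω))) -
          ∫ x, ROP.bump x ∂semicircle|} := by
    filter_upwards [eventually_ge_atTop (max N₁ 1)] with n hn
    have hn1 : 1 ≤ n := le_trans (le_max_right N₁ 1) hn
    have hnN₁ : N₁ ≤ n := le_trans (le_max_left N₁ 1) hn
    have hn0 : (0:ℝ) < n := by exact_mod_cast hn1
    have hsub : {ω | ε < |(∫ x, f x ∂(evMeasure (A n ω))) - ∫ x, f x ∂semicircle|} ⊆
        {ω | δ < |(∫ x, f x ∂(evMeasure (B n ω))) - ∫ x, f x ∂semicircle|} ∪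
        {ω | δ < |(∫ x, ROP.bump x ∂(evMeasure (B n ω))) -
          ∫ x, ROP.bump x ∂semicircle|} := by
      intro ω hω
      by_contra hcon
      simp only [Set.mem_union, Set.mem_setOf_eq] at hcon
      push_neg at hcon
      obtain ⟨hc1, hc2⟩ := hcon
      have hω' : ε < |(∫ x, f x ∂(evMeasure (A n ω))) - ∫ x, f x ∂semicircle| := hω
      rw [hbump1] at hc2
      -- counting comparison
      have hcnt : ∀ t : ℝ, |((ROP.cnt ((hAH n ω).eigenvalues) t : ℕ) : ℝ)
          - ((ROP.cnt ((hBH n ω).eigenvalues) t : ℕ) : ℝ)| ≤ 1 := by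
        intro t
        have h1 : ROP.cnt ((hAH n ω).eigenvalues) t ≤ ROP.cnt ((hBH n ω).eigenvalues) t + 1 :=
          ROP.count_le_count (hAH n ω) (hBH n ω) (hrank n ω) t
        have h2 : ROP.cnt ((hBH n ω).eigenvalues) t ≤ ROP.cnt ((hAH n ω).eigenvalues) t + 1 :=
          ROP.count_le_count (hBH n ω) (hAH n ω) (by
            rw [← neg_sub (A n ω) (B n ω), ROP.rank_neg']
            exact hrank n ω) t
        rw [abs_le]
        constructor
        · have : ((ROP.cnt ((hBH n ω).eigenvalues) t : ℕ) : ℝ) ≤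
              ((ROP.cnt ((hAH n ω).eigenvalues) t : ℕ) : ℝ) + 1 := by exact_mod_cast h2
          linarith
        · have : ((ROP.cnt ((hAH n ω).eigenvalues) t : ℕ) : ℝ) ≤
              ((ROP.cnt ((hBH n ω).eigenvalues) t : ℕ) : ℝ) + 1 := by exact_mod_cast h1
          linarith
      have hmaster := ROP.master (N := n) (by omega) ((hAH n ω).eigenvalues)
        ((hBH n ω).eigenvalues) hm hδpos.le hM hfδ hcnt
        ROP.bump_nonneg ROP.bump_le_one (fun x hx => ROP.bump_zero hx)
      rw [← ROP.integral_evMeasure (hAH n ω) f, ← ROP.integral_evMeasure (hBH n ω) f,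
        ← ROP.integral_evMeasure (hBH n ω) ROP.bump] at hmaster
      -- numeric conclusion
      have h1mh : 1 - ∫ x, ROP.bump x ∂(evMeasure (B n ω)) ≤ δ := by
        have := abs_le.mp hc2
        linarith [this.1]
      have hfrac : 2*‖f‖/(n:ℝ) + 2*(m:ℝ)*‖f‖/(n:ℝ) ≤ ε/2 := by
        have hne : (2*‖f‖ + 2*(m:ℝ)*‖f‖) / (n:ℝ) ≤ ε/2 := by
          rw [div_le_iff₀ hn0]
          have hN₁n : ((2*‖f‖ + 2*(m:ℝ)*‖f‖) / (ε/2)) < (n:ℝ) := by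
            have : (N₁:ℝ) ≤ n := by exact_mod_cast hnN₁
            linarith
          rw [div_lt_iff₀ (by positivity : (0:ℝ) < ε/2)] at hN₁n
          nlinarith
        calc 2*‖f‖/(n:ℝ) + 2*(m:ℝ)*‖f‖/(n:ℝ) = (2*‖f‖ + 2*(m:ℝ)*‖f‖) / (n:ℝ) := by ring
          _ ≤ ε/2 := hne
      have htri := abs_sub_le (∫ x, f x ∂(evMeasure (A n ω)))
        (∫ x, f x ∂(evMeasure (B n ω))) (∫ x, f x ∂semicircle)
      have hBmass : |(∫ x, f x ∂(evMeasure (B n ω))) - ∫ x, f x ∂semicircle| ≤ δ := hc1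
      have hfinal : |(∫ x, f x ∂(evMeasure (A n ω))) - ∫ x, f x ∂semicircle| ≤ ε := by
        have hb2 : 2*‖f‖*(1 - ∫ x, ROP.bump x ∂(evMeasure (B n ω))) ≤ 2*‖f‖*δ := by
          nlinarith
        calc |(∫ x, f x ∂(evMeasure (A n ω))) - ∫ x, f x ∂semicircle|
            ≤ |(∫ x, f x ∂(evMeasure (A n ω))) - ∫ x, f x ∂(evMeasure (B n ω))|
              + |(∫ x, f x ∂(evMeasure (B n ω))) - ∫ x, f x ∂semicircle| := htri
          _ ≤ (2*δ + 2*‖f‖*δ + ε/2) + δ := by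
              have := hmaster
              linarith
          _ = δ * (3 + 2*‖f‖) + ε/2 := by ring
          _ = ε/2 + ε/2 := by rw [hδspec]
          _ = ε := by ring
      linarith
    calc ℙ {ω | ε < |(∫ x, f x ∂(evMeasure (A n ω))) - ∫ x, f x ∂semicircle|}
        ≤ ℙ ({ω | δ < |(∫ x, f x ∂(evMeasure (B n ω))) - ∫ x, f x ∂semicircle|} ∪
          {ω | δ < |(∫ x, ROP.bump x ∂(evMeasure (B n ω))) -
            ∫ x, ROP.bump x ∂semicircle|}) := measure_mono hsub
      _ ≤ _ := measure_union_le _ _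
  have hzero : Tendsto (fun n =>
      ℙ {ω | δ < |(∫ x, f x ∂(evMeasure (B n ω))) - ∫ x, f x ∂semicircle|}
      + ℙ {ω | δ < |(∫ x, ROP.bump x ∂(evMeasure (B n ω))) -
          ∫ x, ROP.bump x ∂semicircle|}) atTop (nhds 0) := by
    have := Tendsto.add htendf htendh
    simpa using this
  apply tendsto_of_tendsto_of_tendsto_of_le_of_le' tendsto_const_nhds hzero
  · filter_upwards with n
    exact zero_le
  · exact hbound
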